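/- The global total cost decomposes as c_gt(x_t, u_t) = c̄(x̄_t, ū_t) + Σ_{l∈L} c̃^l(x̃^l_t, ũ^l_t), where c̄(x̄,ū) = x̄ᵀ(Q̄+Q̆)x̄ + ūᵀ(R̄+R̆)ū with Q̆ = diag(|N^1|Q_1,…,|N^L|Q_L), R̆ = diag(|N^1|R_1,…,|N^L|R_L), and c̃^l(x̃^l,ũ^l) = Σ_{i∈N^l}[(x̃^i)ᵀQ_l x̃^i + (ũ^i)ᵀR_l ũ^i]. -/
import Mathlib
open Matrix Finset

lemma sumL {d : ℕ} {α : Type*} (M : Matrix (Fin d) (Fin d) ℝ)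
    (v : α → Fin d → ℝ) (w : Fin d → ℝ) (s : Finset α) :
    (∑ i ∈ s, v i) ⬝ᵥ M.mulVec w = ∑ i ∈ s, v i ⬝ᵥ M.mulVec w := by
  induction s using Finset.cons_induction with
  | empty => simp
  | cons a s ha ih => simp [Finset.sum_cons, add_dotProduct, ih]

lemma sumR {d : ℕ} {α : Type*} (M : Matrix (Fin d) (Fin d) ℝ)
    (v : Fin d → ℝ) (w : α → Fin d → ℝ) (s : Finset α) :
    v ⬝ᵥ M.mulVec (∑ i ∈ s, w i) = ∑ i ∈ s, v ⬝ᵥ M.mulVec (w i) := by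
  induction s using Finset.cons_induction with
  | empty => simp
  | cons a s ha ih => simp [Finset.sum_cons, Matrix.mulVec_add, dotProduct_add, ih]

lemma smulL {d : ℕ} (M : Matrix (Fin d) (Fin d) ℝ) (c : ℝ) (v w : Fin d → ℝ) :
    (c • v) ⬝ᵥ M.mulVec w = c * (v ⬝ᵥ M.mulVec w) := by
  rw [smul_dotProduct]; rfl

lemma smulR {d : ℕ} (M : Matrix (Fin d) (Fin d) ℝ) (c : ℝ) (v w : Fin d → ℝ) :
    v ⬝ᵥ M.mulVec (c • w) = c * (v ⬝ᵥ M.mulVec w) := by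
  rw [Matrix.mulVec_smul, dotProduct_smul]; rfl

/-- Single-population cost identity: quadratic + exchange terms rewrite as
mean-field plus deviation terms. -/
lemma pop {n d : ℕ} (hn : (n : ℝ) ≠ 0) (M N : Matrix (Fin d) (Fin d) ℝ)
    (v : Fin n → Fin d → ℝ) (vb : Fin d → ℝ)
    (hvb : vb = (n : ℝ)⁻¹ • ∑ i, v i) :
    (∑ i, v i ⬝ᵥ M.mulVec (v i))
      + (∑ i, ∑ j ∈ Finset.univ.erase i, v i ⬝ᵥ N.mulVec (v j))
    = ((n : ℝ) * (n : ℝ)) * (vb ⬝ᵥ N.mulVec vb)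
      + (n : ℝ) * (vb ⬝ᵥ (M - N).mulVec vb)
      + ∑ i, (v i - vb) ⬝ᵥ (M - N).mulVec (v i - vb) := by
  have hS : ∑ i, v i = (n : ℝ) • vb := by
    rw [hvb, smul_smul, mul_inv_cancel₀ hn, one_smul]
  have herase : ∑ i, ∑ j ∈ Finset.univ.erase i, v i ⬝ᵥ N.mulVec (v j)
      = ((n : ℝ) * (n : ℝ)) * (vb ⬝ᵥ N.mulVec vb) - ∑ i, v i ⬝ᵥ N.mulVec (v i) := by
    have h1 : ∀ i, ∑ j ∈ Finset.univ.erase i, v i ⬝ᵥ N.mulVec (v j)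
        = v i ⬝ᵥ N.mulVec (∑ j, v j) - v i ⬝ᵥ N.mulVec (v i) := by
      intro i
      rw [Finset.sum_erase_eq_sub (Finset.mem_univ i), sumR]
    simp only [h1, Finset.sum_sub_distrib]
    rw [← sumL, hS, smulL, smulR]; ring
  have hdev : ∑ i, (v i - vb) ⬝ᵥ (M - N).mulVec (v i - vb)
      = ∑ i, v i ⬝ᵥ (M - N).mulVec (v i) - (n : ℝ) * (vb ⬝ᵥ (M - N).mulVec vb) := by
    have h2 : ∀ i, (v i - vb) ⬝ᵥ (M - N).mulVec (v i - vb)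
        = v i ⬝ᵥ (M - N).mulVec (v i) - v i ⬝ᵥ (M - N).mulVec vb
          - vb ⬝ᵥ (M - N).mulVec (v i) + vb ⬝ᵥ (M - N).mulVec vb := by
      intro i; rw [sub_dotProduct, Matrix.mulVec_sub, dotProduct_sub, dotProduct_sub]; ring
    simp only [h2]
    rw [Finset.sum_add_distrib, Finset.sum_sub_distrib, Finset.sum_sub_distrib,
      ← sumL, ← sumR, hS, smulL, smulR, Finset.sum_const, Finset.card_univ,
      Fintype.card_fin, nsmul_eq_mul]
    ring
  have h3 : ∀ i, v i ⬝ᵥ (M - N).mulVec (v i)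
      = v i ⬝ᵥ M.mulVec (v i) - v i ⬝ᵥ N.mulVec (v i) := by
    intro i; rw [Matrix.sub_mulVec, dotProduct_sub]
  have h4 : vb ⬝ᵥ (M - N).mulVec vb = vb ⬝ᵥ M.mulVec vb - vb ⬝ᵥ N.mulVec vb := by
    rw [Matrix.sub_mulVec, dotProduct_sub]
  rw [herase, hdev]
  simp only [h3, h4, Finset.sum_sub_distrib]
  ring

/-- Cross-population term. -/
lemma cross {d : ℕ} {nl np : ℕ} (hl : (nl : ℝ) ≠ 0) (hp : (np : ℝ) ≠ 0)
    (N : Matrix (Fin d) (Fin d) ℝ)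
    (v : Fin nl → Fin d → ℝ) (w : Fin np → Fin d → ℝ) (vb wb : Fin d → ℝ)
    (hvb : vb = (nl : ℝ)⁻¹ • ∑ i, v i) (hwb : wb = (np : ℝ)⁻¹ • ∑ i, w i) :
    ((nl : ℝ) * (np : ℝ)) * (vb ⬝ᵥ N.mulVec wb)
      = ∑ i, ∑ j, v i ⬝ᵥ N.mulVec (w j) := by
  have hS : ∑ i, v i = (nl : ℝ) • vb := by
    rw [hvb, smul_smul, mul_inv_cancel₀ hl, one_smul]
  have hT : ∑ i, w i = (np : ℝ) • wb := by
    rw [hwb, smul_smul, mul_inv_cancel₀ hp, one_smul]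
  have h : (∑ i, v i) ⬝ᵥ N.mulVec (∑ j, w j) = ∑ i, ∑ j, v i ⬝ᵥ N.mulVec (w j) := by
    rw [sumL]; exact Finset.sum_congr rfl fun i _ => sumR ..
  rw [← h, hS, hT, smulL, smulR]; ring

/-- The global total cost decomposes as
`c_gt(x,u) = c̄(x̄,ū) + ∑_l c̃^l(x̃^l, ũ^l)`. -/
theorem global_cost_decomposition
    (L d k : ℕ) (m : Fin L → ℕ) (hm : ∀ l, 0 < m l)
    (q : Fin L → Matrix (Fin d) (Fin d) ℝ)
    (qbar : Fin L → Fin L → Matrix (Fin d) (Fin d) ℝ)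
    (r : Fin L → Matrix (Fin k) (Fin k) ℝ)
    (rbar : Fin L → Fin L → Matrix (Fin k) (Fin k) ℝ)
    (hq : ∀ l, (q l).IsSymm) (hqbar : ∀ l p, (qbar l p).IsSymm)
    (hr : ∀ l, (r l).IsSymm) (hrbar : ∀ l p, (rbar l p).IsSymm)
    (x : (l : Fin L) → Fin (m l) → Fin d → ℝ)
    (u : (l : Fin L) → Fin (m l) → Fin k → ℝ)
    (xb : Fin L → Fin d → ℝ) (ub : Fin L → Fin k → ℝ)
    (hxb : ∀ l, xb l = (m l : ℝ)⁻¹ • ∑ i, x l i)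
    (hub : ∀ l, ub l = (m l : ℝ)⁻¹ • ∑ i, u l i) :
    -- global cost  c_gt(x,u) = xᵀQx + uᵀRu  with partially exchangeable blocks
    ((∑ l, ∑ i, x l i ⬝ᵥ (q l).mulVec (x l i))
      + (∑ l, ∑ i, ∑ j ∈ Finset.univ.erase i, x l i ⬝ᵥ (qbar l l).mulVec (x l j))
      + (∑ l, ∑ p ∈ Finset.univ.erase l, ∑ i, ∑ j, x l i ⬝ᵥ (qbar l p).mulVec (x p j))
      + (∑ l, ∑ i, u l i ⬝ᵥ (r l).mulVec (u l i))
      + (∑ l, ∑ i, ∑ j ∈ Finset.univ.erase i, u l i ⬝ᵥ (rbar l l).mulVec (u l j))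
      + (∑ l, ∑ p ∈ Finset.univ.erase l, ∑ i, ∑ j, u l i ⬝ᵥ (rbar l p).mulVec (u p j)))
    = -- mean-field cost  c̄(x̄,ū) = x̄ᵀ(Q̄+Q̆)x̄ + ūᵀ(R̄+R̆)ū
      ((∑ l, ∑ p, ((m l : ℝ) * (m p : ℝ)) * (xb l ⬝ᵥ (qbar l p).mulVec (xb p)))
        + (∑ l, (m l : ℝ) * (xb l ⬝ᵥ (q l - qbar l l).mulVec (xb l)))
        + (∑ l, ∑ p, ((m l : ℝ) * (m p : ℝ)) * (ub l ⬝ᵥ (rbar l p).mulVec (ub p)))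
        + (∑ l, (m l : ℝ) * (ub l ⬝ᵥ (r l - rbar l l).mulVec (ub l))))
      -- plus the subpopulation deviation costs  ∑_l c̃^l(x̃^l, ũ^l)
      + ∑ l, ∑ i,
          ((x l i - xb l) ⬝ᵥ (q l - qbar l l).mulVec (x l i - xb l)
            + (u l i - ub l) ⬝ᵥ (r l - rbar l l).mulVec (u l i - ub l)) := by
  have hmR : ∀ l, ((m l : ℕ) : ℝ) ≠ 0 := fun l => Nat.cast_ne_zero.mpr (hm l).ne'
  have HX : (∑ l, ∑ i, x l i ⬝ᵥ (q l).mulVec (x l i))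
        + (∑ l, ∑ i, ∑ j ∈ Finset.univ.erase i, x l i ⬝ᵥ (qbar l l).mulVec (x l j))
      = (∑ l, ((m l : ℝ) * (m l : ℝ)) * (xb l ⬝ᵥ (qbar l l).mulVec (xb l)))
        + (∑ l, (m l : ℝ) * (xb l ⬝ᵥ (q l - qbar l l).mulVec (xb l)))
        + (∑ l, ∑ i, (x l i - xb l) ⬝ᵥ (q l - qbar l l).mulVec (x l i - xb l)) := by
    rw [← Finset.sum_add_distrib, ← Finset.sum_add_distrib, ← Finset.sum_add_distrib]
    exact Finset.sum_congr rfl fun l _ => pop (hmR l) _ _ _ _ (hxb l)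
  have HU : (∑ l, ∑ i, u l i ⬝ᵥ (r l).mulVec (u l i))
        + (∑ l, ∑ i, ∑ j ∈ Finset.univ.erase i, u l i ⬝ᵥ (rbar l l).mulVec (u l j))
      = (∑ l, ((m l : ℝ) * (m l : ℝ)) * (ub l ⬝ᵥ (rbar l l).mulVec (ub l)))
        + (∑ l, (m l : ℝ) * (ub l ⬝ᵥ (r l - rbar l l).mulVec (ub l)))
        + (∑ l, ∑ i, (u l i - ub l) ⬝ᵥ (r l - rbar l l).mulVec (u l i - ub l)) := by
    rw [← Finset.sum_add_distrib, ← Finset.sum_add_distrib, ← Finset.sum_add_distrib]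
    exact Finset.sum_congr rfl fun l _ => pop (hmR l) _ _ _ _ (hub l)
  have HQ : (∑ l, ∑ p, ((m l : ℝ) * (m p : ℝ)) * (xb l ⬝ᵥ (qbar l p).mulVec (xb p)))
      = (∑ l, ((m l : ℝ) * (m l : ℝ)) * (xb l ⬝ᵥ (qbar l l).mulVec (xb l)))
        + (∑ l, ∑ p ∈ Finset.univ.erase l, ∑ i, ∑ j, x l i ⬝ᵥ (qbar l p).mulVec (x p j)) := by
    rw [← Finset.sum_add_distrib]
    refine Finset.sum_congr rfl fun l _ => ?_
    rw [← Finset.add_sum_erase _ _ (Finset.mem_univ l)]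
    congr 1
    exact Finset.sum_congr rfl fun p _ =>
      cross (hmR l) (hmR p) _ _ _ _ _ (hxb l) (hxb p)
  have HR : (∑ l, ∑ p, ((m l : ℝ) * (m p : ℝ)) * (ub l ⬝ᵥ (rbar l p).mulVec (ub p)))
      = (∑ l, ((m l : ℝ) * (m l : ℝ)) * (ub l ⬝ᵥ (rbar l l).mulVec (ub l)))
        + (∑ l, ∑ p ∈ Finset.univ.erase l, ∑ i, ∑ j, u l i ⬝ᵥ (rbar l p).mulVec (u p j)) := by
    rw [← Finset.sum_add_distrib]
    refine Finset.sum_congr rfl fun l _ => ?_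
    rw [← Finset.add_sum_erase _ _ (Finset.mem_univ l)]
    congr 1
    exact Finset.sum_congr rfl fun p _ =>
      cross (hmR l) (hmR p) _ _ _ _ _ (hub l) (hub p)
  have Hdev : ∑ l, ∑ i,
        ((x l i - xb l) ⬝ᵥ (q l - qbar l l).mulVec (x l i - xb l)
          + (u l i - ub l) ⬝ᵥ (r l - rbar l l).mulVec (u l i - ub l))
      = (∑ l, ∑ i, (x l i - xb l) ⬝ᵥ (q l - qbar l l).mulVec (x l i - xb l))
        + (∑ l, ∑ i, (u l i - ub l) ⬝ᵥ (r l - rbar l l).mulVec (u l i - ub l)) := by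
    simp [Finset.sum_add_distrib]
  rw [HQ, HR, Hdev]
  linarith [HX, HU]
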